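/- For every integer k ≥ 4, there exists a coalition partition Ψ of the path P_k with three parts such that the coalition graph CG(P_k, Ψ) is isomorphic to the path P_3. -/

import Mathlib

open SimpleGraph

attribute [local instance] Classical.propDecidable

def Dominates {V : Type*} (G : SimpleGraph V) (S : Set V) : Prop :=
  ∀ v, v ∉ S → ∃ u ∈ S, G.Adj u v

def Coalition {V : Type*} (G : SimpleGraph V) (A B : Set V) : Prop :=
  Disjoint A B ∧ ¬ Dominates G A ∧ ¬ Dominates G B ∧ Dominates G (A ∪ B)

def IsCoalitionPartition {V : Type*} (G : SimpleGraph V) (P : Finset (Set V)) : Prop :=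
  (∀ A ∈ P, A.Nonempty) ∧
  (∀ A ∈ P, ∀ B ∈ P, A ≠ B → Disjoint A B) ∧
  (∀ v : V, ∃ A ∈ P, v ∈ A) ∧
  (∀ A ∈ P, (Dominates G A ∧ ∃ v, A = {v}) ∨
    (¬ Dominates G A ∧ ∃ B ∈ P, B ≠ A ∧ Coalition G A B))

noncomputable def coalitionNumber {V : Type*} (G : SimpleGraph V) : ℕ :=
  sSup {n | ∃ P : Finset (Set V), IsCoalitionPartition G P ∧ P.card = n}

def coalitionGraph {V : Type*} (G : SimpleGraph V) (P : Finset (Set V)) :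
    SimpleGraph {A : Set V // A ∈ P} where
  Adj A B := Coalition G A.1 B.1
  symm := by
    constructor
    rintro A B ⟨d, na, nb, u⟩
    exact ⟨d.symm, nb, na, by rwa [Set.union_comm]⟩
  loopless := by
    constructor
    rintro ⟨A, hA⟩ ⟨d, na, nb, u⟩
    rw [Set.union_self] at u
    exact na u

theorem stmt13 (k : ℕ) (hk : 4 ≤ k) :
    ∃ P : Finset (Set (Fin k)),
      IsCoalitionPartition (SimpleGraph.pathGraph k) P ∧ P.card = 3 ∧
      Nonempty ((coalitionGraph (SimpleGraph.pathGraph k) P) ≃g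
        SimpleGraph.pathGraph 3) := by
  have h0 : 0 < k := by omega
  have h1 : 1 < k := by omega
  have h2 : 2 < k := by omega
  have h3 : 3 < k := by omega
  set G := SimpleGraph.pathGraph k with hG
  set v0 : Fin k := ⟨0, h0⟩ with hv0
  set v1 : Fin k := ⟨1, h1⟩ with hv1
  set v2 : Fin k := ⟨2, h2⟩ with hv2
  set v3 : Fin k := ⟨3, h3⟩ with hv3
  set S0 : Set (Fin k) := {v0} with hS0
  set S1 : Set (Fin k) := {v1} with hS1
  set S2 : Set (Fin k) := {v : Fin k | 2 ≤ v.val} with hS2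
  have adj_iff : ∀ u v : Fin k, G.Adj u v ↔ u.val + 1 = v.val ∨ v.val + 1 = u.val := by
    intro u v; rw [hG, SimpleGraph.pathGraph_adj]
  -- membership characterizations
  have mem0 : ∀ v : Fin k, v ∈ S0 ↔ v.val = 0 := by
    intro v; simp [hS0, hv0, Fin.ext_iff]
  have mem1 : ∀ v : Fin k, v ∈ S1 ↔ v.val = 1 := by
    intro v; simp [hS1, hv1, Fin.ext_iff]
  have mem2 : ∀ v : Fin k, v ∈ S2 ↔ 2 ≤ v.val := by
    intro v; simp [hS2]
  -- non-domination
  have nd0 : ¬ Dominates G S0 := by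
    intro h
    obtain ⟨u, hu, hadj⟩ := h v3 (by rw [mem0]; simp [hv3])
    rw [mem0] at hu
    rw [adj_iff] at hadj
    simp [hv3] at hadj
    omega
  have nd1 : ¬ Dominates G S1 := by
    intro h
    obtain ⟨u, hu, hadj⟩ := h v3 (by rw [mem1]; simp [hv3])
    rw [mem1] at hu
    rw [adj_iff] at hadj
    simp [hv3] at hadj
    omega
  have nd2 : ¬ Dominates G S2 := by
    intro h
    obtain ⟨u, hu, hadj⟩ := h v0 (by rw [mem2]; simp [hv0])
    rw [mem2] at hu
    rw [adj_iff] at hadj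
    simp [hv0] at hadj
    omega
  have du02 : Dominates G (S0 ∪ S2) := by
    intro v hv
    simp only [Set.mem_union] at hv
    push_neg at hv
    rw [mem0, mem2] at hv
    have hval : v.val = 1 := by omega
    refine ⟨v0, Or.inl (by rw [mem0]), ?_⟩
    rw [adj_iff]; left; simp [hv0, hval]
  have du12 : Dominates G (S1 ∪ S2) := by
    intro v hv
    simp only [Set.mem_union] at hv
    push_neg at hv
    rw [mem1, mem2] at hv
    have hval : v.val = 0 := by omega
    refine ⟨v1, Or.inl (by rw [mem1]), ?_⟩
    rw [adj_iff]; right; simp [hv1, hval]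
  have ndu01 : ¬ Dominates G (S0 ∪ S1) := by
    intro h
    obtain ⟨u, hu, hadj⟩ := h v3 (by
      simp only [Set.mem_union]
      rw [mem0, mem1]; simp [hv3])
    simp only [Set.mem_union] at hu
    rw [mem0, mem1] at hu
    rw [adj_iff] at hadj
    simp [hv3] at hadj
    omega
  -- disjointness
  have disj01 : Disjoint S0 S1 := by
    rw [Set.disjoint_left]; intro a ha; rw [mem0] at ha; rw [mem1]; omega
  have disj02 : Disjoint S0 S2 := by
    rw [Set.disjoint_left]; intro a ha; rw [mem0] at ha; rw [mem2]; omega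
  have disj12 : Disjoint S1 S2 := by
    rw [Set.disjoint_left]; intro a ha; rw [mem1] at ha; rw [mem2]; omega
  -- distinctness
  have d01 : S0 ≠ S1 := by
    intro h
    have := (mem0 v0).2 rfl
    rw [h, mem1] at this
    simp [hv0] at this
  have d02 : S0 ≠ S2 := by
    intro h
    have := (mem0 v0).2 rfl
    rw [h, mem2] at this
    simp [hv0] at this
  have d12 : S1 ≠ S2 := by
    intro h
    have := (mem1 v1).2 rfl
    rw [h, mem2] at this
    simp [hv1] at this
  -- coalitions
  have c02 : Coalition G S0 S2 := ⟨disj02, nd0, nd2, du02⟩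
  have c12 : Coalition G S1 S2 := ⟨disj12, nd1, nd2, du12⟩
  have csymm : ∀ A B : Set (Fin k), Coalition G A B → Coalition G B A := by
    rintro A B ⟨d, na, nb, u⟩
    exact ⟨d.symm, nb, na, by rwa [Set.union_comm]⟩
  have nc01 : ¬ Coalition G S0 S1 := by
    rintro ⟨-, -, -, u⟩; exact ndu01 u
  have nc10 : ¬ Coalition G S1 S0 := fun h => nc01 (csymm _ _ h)
  have ncself : ∀ A : Set (Fin k), ¬ Dominates G A → ¬ Coalition G A A := by
    rintro A h ⟨-, -, -, u⟩
    rw [Set.union_self] at u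
    exact h u
  refine ⟨{S0, S1, S2}, ⟨?_, ?_, ?_, ?_⟩, ?_, ?_⟩
  · intro A hA
    simp only [Finset.mem_insert, Finset.mem_singleton] at hA
    rcases hA with rfl | rfl | rfl
    · exact ⟨v0, (mem0 v0).2 rfl⟩
    · exact ⟨v1, (mem1 v1).2 rfl⟩
    · exact ⟨v2, (mem2 v2).2 (by simp [hv2])⟩
  · intro A hA B hB hne
    simp only [Finset.mem_insert, Finset.mem_singleton] at hA hB
    rcases hA with rfl | rfl | rfl <;> rcases hB with rfl | rfl | rfl <;>
      first
        | exact absurd rfl hne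
        | exact disj01 | exact disj02 | exact disj12
        | exact disj01.symm | exact disj02.symm | exact disj12.symm
  · intro v
    rcases lt_or_ge v.val 2 with hl | hl
    · have h01 : v.val = 0 ∨ v.val = 1 := by omega
      rcases h01 with h | h
      · exact ⟨S0, by simp, (mem0 v).2 h⟩
      · exact ⟨S1, by simp, (mem1 v).2 h⟩
    · exact ⟨S2, by simp, (mem2 v).2 hl⟩
  · intro A hA
    simp only [Finset.mem_insert, Finset.mem_singleton] at hA
    rcases hA with rfl | rfl | rfl
    · exact Or.inr ⟨nd0, S2, by simp, d02.symm, c02⟩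
    · exact Or.inr ⟨nd1, S2, by simp, d12.symm, c12⟩
    · exact Or.inr ⟨nd2, S0, by simp, d02, csymm _ _ c02⟩
  · rw [Finset.card_insert_of_notMem (by simp [d01, d02]),
      Finset.card_insert_of_notMem (by simp [d12]), Finset.card_singleton]
  · -- the isomorphism
    have mS0 : S0 ∈ ({S0, S1, S2} : Finset (Set (Fin k))) := by simp
    have mS1 : S1 ∈ ({S0, S1, S2} : Finset (Set (Fin k))) := by simp
    have mS2 : S2 ∈ ({S0, S1, S2} : Finset (Set (Fin k))) := by simp
    let e : Fin 3 ≃ {A : Set (Fin k) // A ∈ ({S0, S1, S2} : Finset (Set (Fin k)))} :=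
      { toFun := ![⟨S0, mS0⟩, ⟨S2, mS2⟩, ⟨S1, mS1⟩]
        invFun := fun A => if A.1 = S0 then 0 else if A.1 = S2 then 1 else 2
        left_inv := by
          intro i
          fin_cases i <;> simp [d01, d02, d12, Ne.symm d01, Ne.symm d02, Ne.symm d12]
        right_inv := by
          rintro ⟨A, hA⟩
          simp only [Finset.mem_insert, Finset.mem_singleton] at hA
          rcases hA with rfl | rfl | rfl <;>
            simp [d01, d02, d12, Ne.symm d01, Ne.symm d02, Ne.symm d12] }
    refine ⟨(SimpleGraph.Iso.symm ⟨e, ?_⟩ : _)⟩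
    intro a b
    show Coalition G (e a).1 (e b).1 ↔ (SimpleGraph.pathGraph 3).Adj a b
    fin_cases a <;> fin_cases b <;>
      simp [e, SimpleGraph.pathGraph_adj, c02, c12, csymm _ _ c02, csymm _ _ c12,
        nc01, nc10, ncself _ nd0, ncself _ nd1, ncself _ nd2]
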